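/- Let d ≥ 1, λ ∈ (0,1), s_0 = (1/2)ln λ, ρ_λ = 2√λ/(1+λ), and ψ(s) = N(s)ρ_λ/d + (1/(d(1+λ)))∑_{i=1}^d (λe^{−s_i}+e^{s_i})1_{{s_i ≥ s_0}} with N(s) = #{i: s_i < s_0}. Define Λ*(x) = sup_{s∈ℝ^d}(⟨s,x⟩ − ln ψ(s)). Then for every x ∈ ℝ_+^d with ∑_{i=1}^d x_i ≤ 1, Λ*(x) = (1/2)(∑_{i=1}^d x_i) ln λ − ln ρ_λ + sup_{y∈ℝ_+^d}(⟨y,x⟩ − ln((1/(2d))∑_{i=1}^d (e^{−y_i}+e^{y_i}))). -/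

import Mathlib

open scoped Classical in
/-- The function ψ from the LDP for the reflected biased random walk. -/
noncomputable def psi (d : ℕ) (lam : ℝ) (s : Fin d → ℝ) : ℝ :=
  ((Finset.univ.filter (fun i => s i < (1 / 2) * Real.log lam)).card : ℝ) *
      (2 * Real.sqrt lam / (1 + lam)) / d
    + (1 / (d * (1 + lam))) *
      ∑ i, (lam * Real.exp (-(s i)) + Real.exp (s i)) *
        (if (1 / 2) * Real.log lam ≤ s i then 1 else 0)

noncomputable def termf (d : ℕ) (lam t : ℝ) : ℝ :=
  if t < (1 / 2) * Real.log lam then (2 * Real.sqrt lam / (1 + lam)) / d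
  else (lam * Real.exp (-t) + Real.exp t) / (d * (1 + lam))

lemma psi_eq (d : ℕ) (lam : ℝ) (s : Fin d → ℝ) :
    psi d lam s = ∑ i, termf d lam (s i) := by
  classical
  unfold psi termf
  rw [Finset.card_filter]
  push_cast
  rw [Finset.sum_mul, Finset.sum_div, Finset.mul_sum, ← Finset.sum_add_distrib]
  refine Finset.sum_congr rfl fun i _ => ?_
  by_cases h : s i < (1 / 2) * Real.log lam
  · rw [if_pos h, if_pos h, if_neg (not_le.mpr h)]; ring
  · rw [if_neg h, if_neg h, if_pos (not_lt.mp h)]; ring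

lemma exp_s0 (lam : ℝ) (h0 : 0 < lam) :
    Real.exp ((1 / 2) * Real.log lam) = Real.sqrt lam := by
  rw [Real.sqrt_eq_rpow, Real.rpow_def_of_pos h0]
  ring_nf

lemma lam_exp_neg_s0 (lam : ℝ) (h0 : 0 < lam) :
    lam * Real.exp (-((1 / 2) * Real.log lam)) = Real.sqrt lam := by
  rw [Real.exp_neg, exp_s0 lam h0]
  rw [mul_comm, inv_mul_eq_div, Real.div_sqrt]

lemma termf_pos (d : ℕ) (hd : 1 ≤ d) (lam t : ℝ) (h0 : 0 < lam) (_h1 : lam < 1) :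
    0 < termf d lam t := by
  have hd0 : (0:ℝ) < d := by exact_mod_cast hd
  have hl : (0:ℝ) < 1 + lam := by linarith
  have hs : 0 < Real.sqrt lam := Real.sqrt_pos.mpr h0
  unfold termf
  split
  · positivity
  · have := Real.exp_pos (-t); have := Real.exp_pos t; positivity

lemma termf_max (d : ℕ) (lam t : ℝ) (h0 : 0 < lam) :
    termf d lam (max t ((1 / 2) * Real.log lam)) = termf d lam t := by
  rcases le_or_gt ((1 / 2) * Real.log lam) t with h | h
  · rw [max_eq_left h]
  · rw [max_eq_right h.le]
    unfold termf
    rw [if_pos h, if_neg (lt_irrefl _), lam_exp_neg_s0 lam h0, exp_s0 lam h0,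
      div_div, mul_comm ((1:ℝ) + lam) (d:ℝ)]
    ring

lemma termf_shift (d : ℕ) (lam y : ℝ) (h0 : 0 < lam) (hy : 0 ≤ y) :
    termf d lam ((1 / 2) * Real.log lam + y)
      = Real.sqrt lam * (Real.exp (-y) + Real.exp y) / (d * (1 + lam)) := by
  have h : ¬ ((1 / 2) * Real.log lam + y < (1 / 2) * Real.log lam) := by linarith
  unfold termf
  rw [if_neg h, neg_add, Real.exp_add, Real.exp_add, ← mul_assoc,
    lam_exp_neg_s0 lam h0, exp_s0 lam h0]
  ring

lemma psi_shift (d : ℕ) (hd : 1 ≤ d) (lam : ℝ) (h0 : 0 < lam) (_h1 : lam < 1)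
    (y : Fin d → ℝ) (hy : ∀ i, 0 ≤ y i) :
    psi d lam (fun i => (1 / 2) * Real.log lam + y i)
      = (2 * Real.sqrt lam / (1 + lam)) *
        ((1 / (2 * d)) * ∑ i, (Real.exp (-(y i)) + Real.exp (y i))) := by
  have hd0 : (d:ℝ) ≠ 0 := by positivity
  have hl : (1:ℝ) + lam ≠ 0 := by positivity
  rw [psi_eq]
  have : ∀ i : Fin d, termf d lam ((1 / 2) * Real.log lam + y i)
      = Real.sqrt lam * (Real.exp (-(y i)) + Real.exp (y i)) / (d * (1 + lam)) :=
    fun i => termf_shift d lam (y i) h0 (hy i)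
  simp only [this]
  rw [← Finset.sum_div, ← Finset.mul_sum]
  field_simp

theorem stmt17 (d : ℕ) (hd : 1 ≤ d) (lam : ℝ) (h0 : 0 < lam) (h1 : lam < 1)
    (x : Fin d → ℝ) (hx : ∀ i, 0 ≤ x i) (hsum : ∑ i, x i ≤ 1) :
    sSup {v : ℝ | ∃ s : Fin d → ℝ, v = ∑ i, s i * x i - Real.log (psi d lam s)}
      = (1 / 2) * (∑ i, x i) * Real.log lam
        - Real.log (2 * Real.sqrt lam / (1 + lam))
        + sSup {v : ℝ | ∃ y : Fin d → ℝ, (∀ i, 0 ≤ y i) ∧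
            v = ∑ i, y i * x i -
              Real.log ((1 / (2 * d)) * ∑ i, (Real.exp (-(y i)) + Real.exp (y i)))} := by
  have hd0 : (0:ℝ) < d := by exact_mod_cast hd
  have hl : (0:ℝ) < 1 + lam := by linarith
  have hsq : 0 < Real.sqrt lam := Real.sqrt_pos.mpr h0
  have hρ : (0:ℝ) < 2 * Real.sqrt lam / (1 + lam) := by positivity
  have hne : Nonempty (Fin d) := ⟨⟨0, hd⟩⟩
  set s0 : ℝ := (1 / 2) * Real.log lam with hs0def
  set ρ : ℝ := 2 * Real.sqrt lam / (1 + lam) with hρdef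
  set c : ℝ := (1 / 2) * (∑ i, x i) * Real.log lam - Real.log ρ with hcdef
  set M : (Fin d → ℝ) → ℝ :=
    fun y => (1 / (2 * (d:ℝ))) * ∑ i, (Real.exp (-(y i)) + Real.exp (y i)) with hMdef
  set A := {v : ℝ | ∃ s : Fin d → ℝ,
      v = ∑ i, s i * x i - Real.log (psi d lam s)} with hAdef
  set B := {v : ℝ | ∃ y : Fin d → ℝ, (∀ i, 0 ≤ y i) ∧
      v = ∑ i, y i * x i - Real.log (M y)} with hBdef
  -- positivity of M
  have hMpos : ∀ y : Fin d → ℝ, 0 < M y := by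
    intro y
    have hs : 0 < ∑ i, (Real.exp (-(y i)) + Real.exp (y i)) :=
      Finset.sum_pos (fun i _ => by positivity) Finset.univ_nonempty
    positivity
  -- key identity
  have hkey : ∀ y : Fin d → ℝ, (∀ i, 0 ≤ y i) →
      ∑ i, (s0 + y i) * x i - Real.log (psi d lam (fun i => s0 + y i))
        = c + (∑ i, y i * x i - Real.log (M y)) := by
    intro y hy
    rw [psi_shift d hd lam h0 h1 y hy, Real.log_mul hρ.ne' (hMpos y).ne']
    have hsplit : ∑ i, (s0 + y i) * x i = s0 * (∑ i, x i) + ∑ i, y i * x i := by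
      rw [Finset.mul_sum, ← Finset.sum_add_distrib]
      exact Finset.sum_congr rfl fun i _ => by ring
    rw [hsplit, hcdef, hs0def]
    ring
  -- bound on B elements
  have hBbd : ∀ y : Fin d → ℝ, (∀ i, 0 ≤ y i) →
      ∑ i, y i * x i - Real.log (M y) ≤ Real.log (2 * d) := by
    intro y hy
    obtain ⟨j, -, hj⟩ := Finset.exists_max_image Finset.univ y Finset.univ_nonempty
    have h1' : ∑ i, y i * x i ≤ y j := by
      calc ∑ i, y i * x i ≤ ∑ i, y j * x i :=
            Finset.sum_le_sum fun i _ =>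
              mul_le_mul_of_nonneg_right (hj i (Finset.mem_univ i)) (hx i)
        _ = y j * ∑ i, x i := (Finset.mul_sum _ _ _).symm
        _ ≤ y j * 1 := mul_le_mul_of_nonneg_left hsum (hy j)
        _ = y j := mul_one _
    have hM : (1 / (2 * (d:ℝ))) * Real.exp (y j) ≤ M y := by
      have hsingle : Real.exp (-(y j)) + Real.exp (y j)
          ≤ ∑ i, (Real.exp (-(y i)) + Real.exp (y i)) :=
        Finset.single_le_sum (f := fun i => Real.exp (-(y i)) + Real.exp (y i))
          (fun i _ => by positivity) (Finset.mem_univ j)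
      have hterm : Real.exp (y j) ≤ ∑ i, (Real.exp (-(y i)) + Real.exp (y i)) := by
        have := (Real.exp_pos (-(y j))).le
        linarith
      have h2d : (0:ℝ) ≤ 1 / (2 * (d:ℝ)) := by positivity
      exact mul_le_mul_of_nonneg_left hterm h2d
    have hlog : Real.log ((1 / (2 * (d:ℝ))) * Real.exp (y j)) ≤ Real.log (M y) :=
      Real.log_le_log (by positivity) hM
    rw [Real.log_mul (by positivity) (Real.exp_pos _).ne', Real.log_exp,
      one_div, Real.log_inv] at hlog
    linarith
  -- clamping: every element of A is ≤ c + some element of B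
  have hclamp : ∀ s : Fin d → ℝ, ∃ b ∈ B,
      ∑ i, s i * x i - Real.log (psi d lam s) ≤ c + b := by
    intro s
    set y : Fin d → ℝ := fun i => max (s i) s0 - s0 with hydef
    have hy : ∀ i, 0 ≤ y i := fun i => by simp [hydef, le_max_right]
    refine ⟨∑ i, y i * x i - Real.log (M y), ⟨y, hy, rfl⟩, ?_⟩
    rw [← hkey y hy]
    have hpsi : psi d lam s = psi d lam (fun i => s0 + y i) := by
      rw [psi_eq, psi_eq]
      refine Finset.sum_congr rfl fun i _ => ?_
      have : s0 + y i = max (s i) s0 := by rw [hydef]; ring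
      rw [this, termf_max d lam (s i) h0]
    rw [hpsi]
    have : ∀ i, s i * x i ≤ (s0 + y i) * x i := by
      intro i
      have h' : s i ≤ s0 + y i := by
        have : s0 + y i = max (s i) s0 := by rw [hydef]; ring
        rw [this]; exact le_max_left _ _
      exact mul_le_mul_of_nonneg_right h' (hx i)
    have hsle : ∑ i, s i * x i ≤ ∑ i, (s0 + y i) * x i :=
      Finset.sum_le_sum (fun i _ => this i)
    linarith
  -- nonemptiness and boundedness
  have hB0 : (0:ℝ) ∈ B := by
    refine ⟨fun _ => 0, fun _ => le_refl 0, ?_⟩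
    have hMone : M (fun _ => 0) = 1 := by
      simp only [hMdef, neg_zero, Real.exp_zero]
      rw [Finset.sum_const, Finset.card_univ, Fintype.card_fin]
      field_simp
      ring
    rw [hMone, Real.log_one]
    simp
  have hBne : B.Nonempty := ⟨0, hB0⟩
  have hBbdd : BddAbove B := by
    refine ⟨Real.log (2 * d), ?_⟩
    rintro b ⟨y, hy, rfl⟩
    exact hBbd y hy
  have hBA : ∀ b ∈ B, c + b ∈ A := by
    rintro b ⟨y, hy, rfl⟩
    exact ⟨fun i => s0 + y i, (hkey y hy).symm⟩
  have hAne : A.Nonempty := ⟨c + 0, hBA 0 hB0⟩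
  have hAbdd : BddAbove A := by
    refine ⟨c + Real.log (2 * d), ?_⟩
    rintro a ⟨s, rfl⟩
    obtain ⟨b, ⟨y, hy, rfl⟩, hb⟩ := hclamp s
    exact le_trans hb (by linarith [hBbd y hy])
  -- conclude
  apply le_antisymm
  · refine csSup_le hAne ?_
    rintro a ⟨s, rfl⟩
    obtain ⟨b, hbB, hb⟩ := hclamp s
    exact le_trans hb (add_le_add_right (le_csSup hBbdd hbB) c)
  · have h := csSup_le hBne (fun b hb => show b ≤ sSup A - c by
      have := le_csSup hAbdd (hBA b hb); linarith)
    linarith
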